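/- Let (G, 𝒫, 𝒯) be an instance of Partitioned Vertex Cover and let H be the Popular Matching instance constructed from it. If M is a popular matching in H and U := {i ∈ V(G) : {a_i, b_i} ∈ M}, then for every pair P ∈ 𝒫 it holds that |U ∩ P| = 1. -/

import Mathlib

open SimpleGraph

universe u

/-- A matching: a set of edges of `G` that are pairwise vertex-disjoint. -/
def IsMatching {W : Type u} (G : SimpleGraph W) (M : Set (Sym2 W)) : Prop :=
  M ⊆ G.edgeSet ∧ ∀ e ∈ M, ∀ e' ∈ M, e ≠ e' → ∀ v : W, v ∈ e → v ∉ e'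

/-- `v` is matched by `M`. -/
def Matched {W : Type u} (M : Set (Sym2 W)) (v : W) : Prop := ∃ w : W, s(v, w) ∈ M

open scoped Classical in
/-- `rank G pref M v = pref v (M(v))`, with the convention `|N(v)|+1` if `v` is unmatched. -/
noncomputable def rank {W : Type u} (G : SimpleGraph W) (pref : W → W → ℕ)
    (M : Set (Sym2 W)) (v : W) : ℕ :=
  if h : ∃ w : W, s(v, w) ∈ M then pref v h.choose else (G.neighborSet v).ncard + 1

/-- The number of vertices preferring `M` over `M'`. -/
noncomputable def vote {W : Type u} (G : SimpleGraph W) (pref : W → W → ℕ)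
    (M M' : Set (Sym2 W)) : ℕ :=
  {v : W | rank G pref M v < rank G pref M' v}.ncard

/-- A popular matching: no other matching is more popular. -/
def IsPopular {W : Type u} (G : SimpleGraph W) (pref : W → W → ℕ) (M : Set (Sym2 W)) : Prop :=
  IsMatching G M ∧
    ∀ M' : Set (Sym2 W), IsMatching G M' → vote G pref M' M ≤ vote G pref M M'

/-- Each vertex has a strict preference list: `pref v` is a bijection from the
neighborhood of `v` onto `{1, …, |N(v)|}`. -/
def HasPref {W : Type u} (G : SimpleGraph W) (pref : W → W → ℕ) : Prop :=
  ∀ v : W, Set.BijOn (pref v) (G.neighborSet v) (Set.Icc 1 (G.neighborSet v).ncard)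

/-- The edge `e ∉ M` is labeled `+2` by `label_M` (given rank function `rk`):
both endpoints prefer each other over their status in `M`. -/
def EdgePlus {W : Type u} (pref : W → W → ℕ) (rk : W → ℕ) (e : Sym2 W) : Prop :=
  ∃ x y : W, e = s(x, y) ∧ pref x y < rk x ∧ pref y x < rk y

/-- The edge `e ∉ M` is labeled `-2` by `label_M` (given rank function `rk`):
both endpoints prefer their status in `M` over each other. -/
def EdgeMinus {W : Type u} (pref : W → W → ℕ) (rk : W → ℕ) (e : Sym2 W) : Prop :=
  ∃ x y : W, e = s(x, y) ∧ rk x < pref x y ∧ rk y < pref y x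

/-- The graph `G_M`: the spanning subgraph of `G` consisting of the edges of `M`
together with the edges not labeled `-2`. -/
def GMgraph {W : Type u} (G : SimpleGraph W) (pref : W → W → ℕ) (M : Set (Sym2 W)) :
    SimpleGraph W where
  Adj x y := G.Adj x y ∧ (s(x, y) ∈ M ∨ ¬ EdgeMinus pref (rank G pref M) s(x, y))
  symm := by
    constructor
    intro x y h
    refine ⟨h.1.symm, ?_⟩
    rw [Sym2.eq_swap]
    exact h.2
  loopless := ⟨fun x h => G.loopless.irrefl x h.1⟩

/-- Consecutive edges alternate between `M` and non-`M`. -/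
def altRel {W : Type u} (M : Set (Sym2 W)) (e e' : Sym2 W) : Prop := e ∈ M ↔ e' ∉ M

/-- An alternating path (with respect to `M`) in a graph `G'`. -/
def IsAltPath {W : Type u} (M : Set (Sym2 W)) {G' : SimpleGraph W} {x y : W}
    (p : G'.Walk x y) : Prop :=
  p.IsPath ∧ List.Chain' (altRel M) p.edges ∧
    (∀ e, p.edges.head? = some e → e ∉ M → ¬ Matched M x) ∧
    (∀ e, p.edges.getLast? = some e → e ∉ M → ¬ Matched M y)

/-- An alternating cycle (with respect to `M`) in a graph `G'`:
the edges alternate cyclically between `M` and non-`M`. -/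
def IsAltCycle {W : Type u} (M : Set (Sym2 W)) {G' : SimpleGraph W} {x : W}
    (p : G'.Walk x x) : Prop :=
  p.IsCycle ∧ List.Chain' (altRel M) (p.edges ++ p.edges.take 1)

/-- `l` contains at least one edge labeled `+2`. -/
def OnePlusEdge {W : Type u} (pref : W → W → ℕ) (rk : W → ℕ) (l : List (Sym2 W)) : Prop :=
  ∃ e ∈ l, EdgePlus pref rk e

/-- `l` contains at least two edges labeled `+2`. -/
def TwoPlusEdges {W : Type u} (pref : W → W → ℕ) (rk : W → ℕ) (l : List (Sym2 W)) : Prop :=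
  ∃ e ∈ l, ∃ e' ∈ l, e ≠ e' ∧ EdgePlus pref rk e ∧ EdgePlus pref rk e'

/-- A vertex cover. -/
def IsVC {V : Type u} (G : SimpleGraph V) (U : Set V) : Prop :=
  ∀ ⦃x y : V⦄, G.Adj x y → x ∈ U ∨ y ∈ U
/-- An instance of Partitioned Vertex Cover: `G` is a finite simple graph, `P` is a
collection of pairwise disjoint edges of `G`, `T` is a collection of pairwise disjoint
3-element vertex sets each inducing a triangle in `G`, and every vertex of `G` lies in
exactly one member of `P ∪ T`. -/
def IsPVC {V : Type u} (G : SimpleGraph V) (P : Set (Sym2 V)) (T : Set (Finset V)) : Prop :=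
  Finite V ∧
  P ⊆ G.edgeSet ∧
  (∀ e ∈ P, ∀ e' ∈ P, e ≠ e' → ∀ v : V, v ∈ e → v ∉ e') ∧
  (∀ t ∈ T, t.card = 3) ∧
  (∀ t ∈ T, ∀ x ∈ t, ∀ y ∈ t, x ≠ y → G.Adj x y) ∧
  (∀ t ∈ T, ∀ t' ∈ T, t ≠ t' → ∀ v : V, v ∈ t → v ∉ t') ∧
  (∀ v : V, (∃ e ∈ P, v ∈ e) ∨ (∃ t ∈ T, v ∈ t)) ∧
  (∀ v : V, ¬ ((∃ e ∈ P, v ∈ e) ∧ (∃ t ∈ T, v ∈ t)))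

/-- A solution of a Partitioned Vertex Cover instance: a vertex cover `U` with
`|U ∩ P| = 1` for every pair `P` and `|U ∩ T| = 2` for every triple `T`. -/
def IsPVCSolution {V : Type u} (G : SimpleGraph V) (P : Set (Sym2 V)) (T : Set (Finset V))
    (U : Set V) : Prop :=
  IsVC G U ∧
  (∀ e ∈ P, {x : V | x ∈ e ∧ x ∈ U}.ncard = 1) ∧
  (∀ t ∈ T, {x : V | x ∈ t ∧ x ∈ U}.ncard = 2)

/-- The vertices of the graph `H` built from a Partitioned Vertex Cover instance:
`a i`, `b i`, `c i`, `d i` for a vertex `i` of `G`; `u i j` is the vertex `u^e_i` for the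
edge `e = {i,j}` of `G`; `f i j` is the vertex `f_{ij}` for the pair `{i,j} ∈ P`. -/
inductive Gad (V : Type u) : Type u where
  | a : V → Gad V
  | b : V → Gad V
  | c : V → Gad V
  | d : V → Gad V
  | u : V → V → Gad V
  | f : V → V → Gad V
deriving DecidableEq

/-- Which formal gadget vertices are really vertices of `H`. -/
def Gad.valid {V : Type u} (G : SimpleGraph V) (P : Set (Sym2 V)) : Gad V → Prop
  | .u i j => G.Adj i j
  | .f i j => s(i, j) ∈ P
  | _ => True

/-- The edges of `H`, up to symmetry. -/
inductive HBase {V : Type u} (G : SimpleGraph V) (P : Set (Sym2 V)) (T : Set (Finset V)) :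
    Gad V → Gad V → Prop where
  | da (i : V) : HBase G P T (.d i) (.a i)
  | ab (i : V) : HBase G P T (.a i) (.b i)
  | ac (i : V) : HBase G P T (.a i) (.c i)
  | bc (i : V) : HBase G P T (.b i) (.c i)
  | uu {i j : V} (h : G.Adj i j) : HBase G P T (.u i j) (.u j i)
  | bu {i j : V} (h : G.Adj i j) : HBase G P T (.b i) (.u i j)
  | df {i j : V} (h : s(i, j) ∈ P) : HBase G P T (.d i) (.f i j)
  | fc {i j : V} (h : s(i, j) ∈ P) : HBase G P T (.f i j) (.c j)
  | cd {i j : V} (h : s(i, j) ∈ P) : HBase G P T (.c i) (.d j)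
  | dd {i j : V} {t : Finset V} (ht : t ∈ T) (hi : i ∈ t) (hj : j ∈ t) (hne : i ≠ j) :
      HBase G P T (.d i) (.d j)
  | cc {i j : V} {t : Finset V} (ht : t ∈ T) (hi : i ∈ t) (hj : j ∈ t) (hne : i ≠ j) :
      HBase G P T (.c i) (.c j)

/-- The graph `H` of the Popular Matching instance built from `(G, P, T)`. -/
def Hgraph {V : Type u} (G : SimpleGraph V) (P : Set (Sym2 V)) (T : Set (Finset V)) :
    SimpleGraph {g : Gad V // Gad.valid G P g} where
  Adj x y := x ≠ y ∧ (HBase G P T x.1 y.1 ∨ HBase G P T y.1 x.1)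
  symm := ⟨fun _ _ h => ⟨h.1.symm, h.2.symm⟩⟩
  loopless := ⟨fun _ h => h.1 rfl⟩

/-- The Popular Matching instance (graph together with preference lists) constructed
from a Partitioned Vertex Cover instance `(G, P, T)`.  The field `pref` gives the
preference lists; all its values on the neighborhoods in `H` are pinned down, except
the ranks that `b i` assigns to the vertices `u^e_i`, which form an arbitrary fixed
bijection onto `{2, …, deg_G(i) + 1}`. -/
structure Reduction (V : Type u) [LinearOrder V] : Type u where
  G : SimpleGraph V
  P : Set (Sym2 V)
  T : Set (Finset V)
  ispvc : IsPVC G P T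
  pref : Gad V → Gad V → ℕ
  pref_ab : ∀ i : V, pref (.a i) (.b i) = 1
  pref_ac : ∀ i : V, pref (.a i) (.c i) = 2
  pref_ad : ∀ i : V, pref (.a i) (.d i) = 3
  pref_ba : ∀ i : V, pref (.b i) (.a i) = 1
  pref_bu : ∀ i : V, Set.BijOn (pref (.b i)) {g : Gad V | ∃ j : V, G.Adj i j ∧ g = .u i j}
      (Set.Icc 2 ((G.neighborSet i).ncard + 1))
  pref_bc : ∀ i : V, pref (.b i) (.c i) = (G.neighborSet i).ncard + 2
  pref_ca : ∀ i : V, pref (.c i) (.a i) = 1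
  pref_cb : ∀ i : V, pref (.c i) (.b i) = 2
  pref_da : ∀ i : V, pref (.d i) (.a i) = 1
  pref_uu : ∀ i j : V, G.Adj i j → pref (.u i j) (.u j i) = 1
  pref_ub : ∀ i j : V, G.Adj i j → pref (.u i j) (.b i) = 2
  pref_cf : ∀ i j : V, s(i, j) ∈ P → pref (.c i) (.f j i) = 3
  pref_cd : ∀ i j : V, s(i, j) ∈ P → pref (.c i) (.d j) = 4
  pref_dc : ∀ i j : V, s(i, j) ∈ P → pref (.d i) (.c j) = 2
  pref_df : ∀ i j : V, s(i, j) ∈ P → pref (.d i) (.f i j) = 3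
  pref_fd : ∀ i j : V, s(i, j) ∈ P → pref (.f i j) (.d i) = 1
  pref_fc : ∀ i j : V, s(i, j) ∈ P → pref (.f i j) (.c j) = 2
  pref_tri : ∀ t ∈ T, ∀ i j k : V, t = {i, j, k} → i < j → j < k →
    pref (.c i) (.c k) = 3 ∧ pref (.c i) (.c j) = 4 ∧
    pref (.c j) (.c i) = 3 ∧ pref (.c j) (.c k) = 4 ∧
    pref (.c k) (.c j) = 3 ∧ pref (.c k) (.c i) = 4 ∧
    pref (.d i) (.d j) = 2 ∧ pref (.d i) (.d k) = 3 ∧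
    pref (.d j) (.d k) = 2 ∧ pref (.d j) (.d i) = 3 ∧
    pref (.d k) (.d i) = 2 ∧ pref (.d k) (.d j) = 3

namespace Reduction

variable {V : Type u} [LinearOrder V] (R : Reduction V)

/-- The vertex set of `H`. -/
abbrev HV : Type u := {g : Gad V // Gad.valid R.G R.P g}

/-- The graph `H`. -/
def H : SimpleGraph R.HV := Hgraph R.G R.P R.T

/-- The preference lists of `H`, as a function on its vertices. -/
def prefH : R.HV → R.HV → ℕ := fun x y => R.pref x.1 y.1

/-- The vertex `a_i` of `H`. -/
def va (i : V) : R.HV := ⟨.a i, trivial⟩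
/-- The vertex `b_i` of `H`. -/
def vb (i : V) : R.HV := ⟨.b i, trivial⟩
/-- The vertex `c_i` of `H`. -/
def vc (i : V) : R.HV := ⟨.c i, trivial⟩
/-- The vertex `d_i` of `H`. -/
def vd (i : V) : R.HV := ⟨.d i, trivial⟩
/-- The vertex `u^e_i` of `H`, for an edge `e = {i,j}` of `G`. -/
def vu (i j : V) (h : R.G.Adj i j) : R.HV := ⟨.u i j, h⟩
/-- The vertex `f_{ij}` of `H`, for a pair `{i,j} ∈ P`. -/
def vf (i j : V) (h : s(i, j) ∈ R.P) : R.HV := ⟨.f i j, h⟩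

/-- The matching `M*` in `H` constructed from a solution `U`. -/
def Mstar (U : Set V) : Set (Sym2 R.HV) :=
  {e : Sym2 R.HV |
    (∃ (i j : V) (h : R.G.Adj i j), e = s(R.vu i j h, R.vu j i h.symm)) ∨
    (∃ (x y : V) (h : s(x, y) ∈ R.P) (h' : s(y, x) ∈ R.P), x ∉ U ∧ y ∈ U ∧
      (e = s(R.va x, R.vd x) ∨ e = s(R.vb x, R.vc x) ∨ e = s(R.va y, R.vb y) ∨
       e = s(R.vf x y h, R.vc y) ∨ e = s(R.vf y x h', R.vd y))) ∨
    (∃ t ∈ R.T, ∃ x y z : V, t = {x, y, z} ∧ x ∉ U ∧ y ∈ U ∧ z ∈ U ∧ y ≠ z ∧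
      R.pref (.d x) (.d y) < R.pref (.d x) (.d z) ∧
      (e = s(R.va x, R.vd x) ∨ e = s(R.vb x, R.vc x) ∨ e = s(R.va y, R.vb y) ∨
       e = s(R.va z, R.vb z) ∨ e = s(R.vc y, R.vc z) ∨ e = s(R.vd y, R.vd z)))}

end Reduction

/-- The vertex set of the Pair Selector gadget associated with a pair `{i,j}`. -/
def pairGadget {V : Type u} (i j : V) : Set (Gad V) :=
  {g : Gad V | ∃ x : V, (x = i ∨ x = j) ∧ (g = .a x ∨ g = .b x ∨ g = .c x ∨ g = .d x)} ∪
    {Gad.f i j, Gad.f j i}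

/-- The vertex set of the Triple Selector gadget associated with a triple `t`. -/
def tripleGadget {V : Type u} (t : Finset V) : Set (Gad V) :=
  {g : Gad V | ∃ x ∈ t, g = .a x ∨ g = .b x ∨ g = .c x ∨ g = .d x}


section Infra

variable {W : Type u} {G' : SimpleGraph W} {pref : W → W → ℕ}

lemma matching_eq_of_mem {M : Set (Sym2 W)} (hM : IsMatching G' M) {e e' : Sym2 W}
    (he : e ∈ M) (he' : e' ∈ M) {v : W} (hv : v ∈ e) (hv' : v ∈ e') : e = e' := by
  by_contra h
  exact hM.2 e he e' he' h v hv hv'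

lemma partner_unique {M : Set (Sym2 W)} (hM : IsMatching G' M) {v x y : W}
    (hx : s(v, x) ∈ M) (hy : s(v, y) ∈ M) : x = y :=
  Sym2.congr_right.mp (matching_eq_of_mem hM hx hy (Sym2.mem_mk_left _ _) (Sym2.mem_mk_left _ _))

lemma matched_of_mem {M : Set (Sym2 W)} {e : Sym2 W} {v : W} (he : e ∈ M) (hv : v ∈ e) :
    Matched M v := by
  obtain ⟨w, rfl⟩ := Sym2.mem_iff_exists.mp hv
  exact ⟨w, he⟩

lemma rank_eq_of_mem {M : Set (Sym2 W)} (hM : IsMatching G' M) {v w : W}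
    (h : s(v, w) ∈ M) : rank G' pref M v = pref v w := by
  have hex : ∃ x : W, s(v, x) ∈ M := ⟨w, h⟩
  rw [rank, dif_pos hex]
  have := partner_unique hM hex.choose_spec h
  rw [this]

lemma rank_eq_of_unmatched {M : Set (Sym2 W)} (h : ¬ Matched M v) :
    rank G' pref M v = (G'.neighborSet v).ncard + 1 := by
  rw [rank]
  exact dif_neg h

lemma rank_congr {M M' : Set (Sym2 W)} (hM : IsMatching G' M) (hM' : IsMatching G' M')
    {v : W} (h : ∀ w : W, s(v, w) ∈ M ↔ s(v, w) ∈ M') :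
    rank G' pref M v = rank G' pref M' v := by
  by_cases hv : Matched M v
  · obtain ⟨w, hw⟩ := hv
    rw [rank_eq_of_mem hM hw, rank_eq_of_mem hM' ((h w).mp hw)]
  · have hv' : ¬ Matched M' v := fun ⟨w, hw⟩ => hv ⟨w, (h w).mpr hw⟩
    rw [rank_eq_of_unmatched hv, rank_eq_of_unmatched hv']

lemma matching_diff_union {M Rem Add : Set (Sym2 W)} (hM : IsMatching G' M)
    (hAddE : ∀ e ∈ Add, e ∈ G'.edgeSet)
    (hAddD : ∀ e ∈ Add, ∀ e' ∈ Add, e ≠ e' → ∀ v : W, v ∈ e → v ∉ e')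
    (h3 : ∀ e ∈ Add, ∀ v : W, v ∈ e → ∀ e' ∈ M, v ∈ e' → e' ∈ Rem) :
    IsMatching G' ((M \ Rem) ∪ Add) := by
  constructor
  · rintro e (⟨he, -⟩ | he)
    · exact hM.1 he
    · exact hAddE e he
  · rintro e (⟨he, heR⟩ | he) e' (⟨he', heR'⟩ | he') hne v hv hv'
    · exact hM.2 e he e' he' hne v hv hv'
    · exact heR (h3 e' he' v hv' e he hv)
    · exact heR' (h3 e he v hv e' he' hv')
    · exact hAddD e he e' he' hne v hv hv'

lemma untouched_iff {M Rem Add : Set (Sym2 W)} {v : W}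
    (hv : ∀ e ∈ Rem, v ∉ e) (hv' : ∀ e ∈ Add, v ∉ e) (w : W) :
    s(v, w) ∈ M ↔ s(v, w) ∈ (M \ Rem) ∪ Add := by
  constructor
  · intro h
    exact Or.inl ⟨h, fun hr => hv _ hr (Sym2.mem_mk_left _ _)⟩
  · rintro (⟨h, -⟩ | h)
    · exact h
    · exact absurd (Sym2.mem_mk_left v w) (hv' _ h)

lemma beats [Finite W] {M M' : Set (Sym2 W)}
    (hpop : IsPopular G' pref M) (hM' : IsMatching G' M') (I Wb : Set W)
    (hI : ∀ v ∈ I, rank G' pref M' v < rank G' pref M v)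
    (hWb : ∀ v : W, rank G' pref M v < rank G' pref M' v → v ∈ Wb)
    (hcard : Wb.ncard < I.ncard) : False := by
  have h1 : I.ncard ≤ vote G' pref M' M :=
    Set.ncard_le_ncard (fun v hv => hI v hv) (Set.toFinite _)
  have h2 : vote G' pref M M' ≤ Wb.ncard :=
    Set.ncard_le_ncard (fun v hv => hWb v hv) (Set.toFinite _)
  have h3 := hpop.2 M' hM'
  omega

lemma hWb_tool {M M' : Set (Sym2 W)} (hM : IsMatching G' M) (hM' : IsMatching G' M')
    (I Wb : Set W)
    (hI : ∀ v ∈ I, rank G' pref M' v < rank G' pref M v)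
    (hcover : ∀ v : W, v ∉ I → v ∉ Wb → ∀ w : W, s(v, w) ∈ M ↔ s(v, w) ∈ M') :
    ∀ v : W, rank G' pref M v < rank G' pref M' v → v ∈ Wb := by
  intro v h
  by_contra hv
  by_cases hvI : v ∈ I
  · exact absurd (hI v hvI) (lt_asymm h)
  · rw [rank_congr hM hM' (hcover v hvI hv)] at h
    exact lt_irrefl _ h

lemma endpoint_covered {M Rem : Set (Sym2 W)} (hM : IsMatching G' M) {x : W} {e0 : Sym2 W}
    (he0 : e0 ∈ M) (hx : x ∈ e0) (he0R : e0 ∈ Rem) :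
    ∀ e' ∈ M, x ∈ e' → e' ∈ Rem := fun e' he' hx' =>
  (matching_eq_of_mem hM he' he0 hx' hx) ▸ he0R

lemma endpoint_unmatched {M : Set (Sym2 W)} (h : ¬ Matched M x) {C : Sym2 W → Prop} :
    ∀ e' ∈ M, x ∈ e' → C e' := fun e' he' hx' => absurd (matched_of_mem he' hx') h

lemma edge_core {x y z t : W} (h1 : x ≠ z) (h2 : x ≠ t) (h3 : y ≠ z) (h4 : y ≠ t) :
    ∀ v : W, v ∈ s(x, y) → v ∉ s(z, t) := by
  intro v hv hv'
  rcases Sym2.mem_iff.mp hv with rfl | rfl <;> rcases Sym2.mem_iff.mp hv' with h | h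
  exacts [h1 h, h2 h, h3 h, h4 h]

lemma disj2 {x1 y1 x2 y2 : W} (c12 : ∀ v : W, v ∈ s(x1, y1) → v ∉ s(x2, y2)) :
    ∀ e ∈ ({s(x1, y1), s(x2, y2)} : Set (Sym2 W)),
      ∀ e' ∈ ({s(x1, y1), s(x2, y2)} : Set (Sym2 W)),
      e ≠ e' → ∀ v : W, v ∈ e → v ∉ e' := by
  rintro e (rfl | rfl) e' (rfl | rfl) hne v hv hv'
  · exact hne rfl
  · exact c12 v hv hv'
  · exact c12 v hv' hv
  · exact hne rfl

lemma disj3 {x1 y1 x2 y2 x3 y3 : W}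
    (c12 : ∀ v : W, v ∈ s(x1, y1) → v ∉ s(x2, y2))
    (c13 : ∀ v : W, v ∈ s(x1, y1) → v ∉ s(x3, y3))
    (c23 : ∀ v : W, v ∈ s(x2, y2) → v ∉ s(x3, y3)) :
    ∀ e ∈ ({s(x1, y1), s(x2, y2), s(x3, y3)} : Set (Sym2 W)),
      ∀ e' ∈ ({s(x1, y1), s(x2, y2), s(x3, y3)} : Set (Sym2 W)),
      e ≠ e' → ∀ v : W, v ∈ e → v ∉ e' := by
  rintro e (rfl | rfl | rfl) e' (rfl | rfl | rfl) hne v hv hv' <;>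
    first
      | exact hne rfl
      | exact c12 v hv hv'
      | exact c12 v hv' hv
      | exact c13 v hv hv'
      | exact c13 v hv' hv
      | exact c23 v hv hv'
      | exact c23 v hv' hv

end Infra


attribute [local simp] Subtype.ext_iff

lemma gad_finite {V : Type u} [Finite V] : Finite (Gad V) := by
  apply Finite.of_injective (fun g : Gad V => match g with
    | .a i => ((0 : Fin 6), i, i) | .b i => (1, i, i) | .c i => (2, i, i)
    | .d i => (3, i, i) | .u i j => (4, i, j) | .f i j => (5, i, j))
  intro g g' h
  cases g <;> cases g' <;> simp_all

namespace Reduction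

variable {V : Type u} [LinearOrder V] (R : Reduction V)

lemma hv_finite : Finite R.HV := by
  have : Finite V := R.ispvc.1
  have : Finite (Gad V) := gad_finite
  exact Subtype.finite

lemma pair_adj {i j : V} (h : s(i, j) ∈ R.P) : R.G.Adj i j :=
  (SimpleGraph.mem_edgeSet R.G).mp (R.ispvc.2.1 h)

lemma pair_ne {i j : V} (h : s(i, j) ∈ R.P) : i ≠ j := (R.pair_adj h).ne

lemma pair_swap {i j : V} (h : s(i, j) ∈ R.P) : s(j, i) ∈ R.P := by
  rwa [Sym2.eq_swap]

lemma pair_pin {i j k : V} (hp : s(i, j) ∈ R.P) (h' : s(i, k) ∈ R.P) : k = j := by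
  by_cases he : s(i, k) = s(i, j)
  · exact Sym2.congr_right.mp he
  · exact absurd (Sym2.mem_mk_left i j)
      (R.ispvc.2.2.1 _ h' _ hp he i (Sym2.mem_mk_left i k))

lemma pair_not_triple {i j : V} (hp : s(i, j) ∈ R.P) {t : Finset V} (ht : t ∈ R.T)
    (hit : i ∈ t) : False :=
  R.ispvc.2.2.2.2.2.2.2 i ⟨⟨s(i, j), hp, Sym2.mem_mk_left i j⟩, ⟨t, ht, hit⟩⟩

lemma adj_of_mem {M : Set (Sym2 R.HV)} (hM : IsMatching R.H M) {x y : R.HV}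
    (h : s(x, y) ∈ M) : R.H.Adj x y := (SimpleGraph.mem_edgeSet _).mp (hM.1 h)

lemma H_adj_iff {x y : R.HV} :
    R.H.Adj x y ↔ x ≠ y ∧ (HBase R.G R.P R.T x.1 y.1 ∨ HBase R.G R.P R.T y.1 x.1) := Iff.rfl

lemma adj_a {i : V} {x : R.HV} (h : R.H.Adj (R.va i) x) :
    x = R.vb i ∨ x = R.vc i ∨ x = R.vd i := by
  obtain ⟨g, hg⟩ := x
  obtain ⟨-, h | h⟩ := R.H_adj_iff.mp h
  · cases h with
    | ab => exact Or.inl (Subtype.ext rfl)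
    | ac => exact Or.inr (Or.inl (Subtype.ext rfl))
  · cases h with
    | da => exact Or.inr (Or.inr (Subtype.ext rfl))

lemma adj_b {i : V} {x : R.HV} (h : R.H.Adj (R.vb i) x) :
    x = R.va i ∨ x = R.vc i ∨ ∃ (k : V) (hk : R.G.Adj i k), x = R.vu i k hk := by
  obtain ⟨g, hg⟩ := x
  obtain ⟨-, h | h⟩ := R.H_adj_iff.mp h
  · cases h with
    | bc => exact Or.inr (Or.inl (Subtype.ext rfl))
    | bu hk => exact Or.inr (Or.inr ⟨_, hk, Subtype.ext rfl⟩)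
  · cases h with
    | ab => exact Or.inl (Subtype.ext rfl)

lemma adj_c {i j : V} (hp : s(i, j) ∈ R.P) {x : R.HV} (h : R.H.Adj (R.vc i) x) :
    x = R.va i ∨ x = R.vb i ∨ x = R.vd j ∨ x = R.vf j i (R.pair_swap hp) := by
  obtain ⟨g, hg⟩ := x
  obtain ⟨-, h | h⟩ := R.H_adj_iff.mp h
  · cases h with
    | cd h' =>
        obtain rfl := R.pair_pin hp h'
        exact Or.inr (Or.inr (Or.inl (Subtype.ext rfl)))
    | cc ht hi hj hne => exact (R.pair_not_triple hp ht hi).elim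
  · cases h with
    | ac => exact Or.inl (Subtype.ext rfl)
    | bc => exact Or.inr (Or.inl (Subtype.ext rfl))
    | fc h' =>
        obtain rfl := R.pair_pin hp (R.pair_swap h')
        exact Or.inr (Or.inr (Or.inr (Subtype.ext rfl)))
    | cc ht hi hj hne => exact (R.pair_not_triple hp ht hj).elim

lemma adj_d {i j : V} (hp : s(i, j) ∈ R.P) {x : R.HV} (h : R.H.Adj (R.vd i) x) :
    x = R.va i ∨ x = R.vc j ∨ x = R.vf i j hp := by
  obtain ⟨g, hg⟩ := x
  obtain ⟨-, h | h⟩ := R.H_adj_iff.mp h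
  · cases h with
    | da => exact Or.inl (Subtype.ext rfl)
    | df h' =>
        obtain rfl := R.pair_pin hp h'
        exact Or.inr (Or.inr (Subtype.ext rfl))
    | dd ht hi hj hne => exact (R.pair_not_triple hp ht hi).elim
  · cases h with
    | cd h' =>
        obtain rfl := R.pair_pin hp (R.pair_swap h')
        exact Or.inr (Or.inl (Subtype.ext rfl))
    | dd ht hi hj hne => exact (R.pair_not_triple hp ht hj).elim

lemma adj_f {i j : V} (hp : s(i, j) ∈ R.P) {x : R.HV} (h : R.H.Adj (R.vf i j hp) x) :
    x = R.vd i ∨ x = R.vc j := by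
  obtain ⟨g, hg⟩ := x
  obtain ⟨-, h | h⟩ := R.H_adj_iff.mp h
  · cases h with
    | fc h' => exact Or.inr (Subtype.ext rfl)
  · cases h with
    | df h' => exact Or.inl (Subtype.ext rfl)

lemma adj_u {i k : V} (hk : R.G.Adj i k) {x : R.HV} (h : R.H.Adj (R.vu i k hk) x) :
    x = R.vb i ∨ x = R.vu k i hk.symm := by
  obtain ⟨g, hg⟩ := x
  obtain ⟨-, h | h⟩ := R.H_adj_iff.mp h
  · cases h with
    | uu h' => exact Or.inr (Subtype.ext rfl)
  · cases h with
    | uu h' => exact Or.inr (Subtype.ext rfl)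
    | bu h' => exact Or.inl (Subtype.ext rfl)

lemma H_adj_ab (i : V) : R.H.Adj (R.va i) (R.vb i) :=
  R.H_adj_iff.mpr ⟨by simp [Reduction.va, Reduction.vb], Or.inl (HBase.ab i)⟩

lemma H_adj_ac (i : V) : R.H.Adj (R.va i) (R.vc i) :=
  R.H_adj_iff.mpr ⟨by simp [Reduction.va, Reduction.vc], Or.inl (HBase.ac i)⟩

lemma H_adj_da (i : V) : R.H.Adj (R.vd i) (R.va i) :=
  R.H_adj_iff.mpr ⟨by simp [Reduction.vd, Reduction.va], Or.inl (HBase.da i)⟩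

lemma H_adj_cb (i : V) : R.H.Adj (R.vc i) (R.vb i) :=
  R.H_adj_iff.mpr ⟨by simp [Reduction.vc, Reduction.vb], Or.inr (HBase.bc i)⟩

lemma H_adj_uu {i k : V} (hk : R.G.Adj i k) :
    R.H.Adj (R.vu i k hk) (R.vu k i hk.symm) :=
  R.H_adj_iff.mpr ⟨by simp [Reduction.vu, hk.ne], Or.inl (HBase.uu hk)⟩

lemma H_adj_df {i j : V} (hp : s(i, j) ∈ R.P) : R.H.Adj (R.vd i) (R.vf i j hp) :=
  R.H_adj_iff.mpr ⟨by simp [Reduction.vd, Reduction.vf], Or.inl (HBase.df hp)⟩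

lemma H_adj_fc {i j : V} (hp : s(i, j) ∈ R.P) : R.H.Adj (R.vf i j hp) (R.vc j) :=
  R.H_adj_iff.mpr ⟨by simp [Reduction.vf, Reduction.vc], Or.inl (HBase.fc hp)⟩

lemma H_adj_cd {i j : V} (hp : s(i, j) ∈ R.P) : R.H.Adj (R.vc i) (R.vd j) :=
  R.H_adj_iff.mpr ⟨by simp [Reduction.vc, Reduction.vd], Or.inl (HBase.cd hp)⟩

end Reduction


namespace Reduction

variable {V : Type u} [LinearOrder V] (R : Reduction V)

/-- A one-edge (or two-one-edge) local swap helper specialized to a triangle of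
`c_i, d_j, f_ji` used in the `B2` analysis: `M' = (M \ {er}) ∪ {s(p,q)}`. -/
lemma prefH_def (x y : R.HV) : R.prefH x y = R.pref x.1 y.1 := rfl

lemma claim1 {M : Set (Sym2 R.HV)} (hpop : IsPopular R.H R.prefH M) (i : V) :
    Matched M (R.va i) := by
  have hfin : Finite R.HV := R.hv_finite
  have hM : IsMatching R.H M := hpop.1
  by_contra ha
  have hnca : 0 < (R.H.neighborSet (R.va i)).ncard :=
    (Set.ncard_pos (Set.toFinite _)).mpr ⟨R.vb i, R.H_adj_ab i⟩
  have hncb : 0 < (R.H.neighborSet (R.vb i)).ncard :=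
    (Set.ncard_pos (Set.toFinite _)).mpr ⟨R.va i, (R.H_adj_ab i).symm⟩
  have hab : R.va i ≠ R.vb i := (R.H_adj_ab i).ne
  by_cases hb : Matched M (R.vb i)
  · obtain ⟨x, hx⟩ := hb
    have hxa : x ≠ R.va i := by
      rintro rfl
      exact ha (matched_of_mem hx (Sym2.mem_mk_right _ _))
    have hpx : 2 ≤ R.pref (.b i) x.1 := by
      rcases R.adj_b (R.adj_of_mem hM hx) with rfl | rfl | ⟨k, hk, rfl⟩
      · exact absurd rfl hxa
      · rw [show (R.vc i).1 = Gad.c i from rfl, R.pref_bc i]; omega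
      · have := (R.pref_bu i).mapsTo ⟨k, hk, rfl⟩
        exact (Set.mem_Icc.mp this).1
    set M' := (M \ {s(R.vb i, x)}) ∪ {s(R.va i, R.vb i)} with hM'def
    have hM' : IsMatching R.H M' := by
      apply matching_diff_union hM
      · rintro e rfl
        exact (SimpleGraph.mem_edgeSet _).mpr (R.H_adj_ab i)
      · rintro e rfl e' rfl hne
        exact absurd rfl hne
      · rintro e rfl v hv e' he' hv'
        rcases Sym2.mem_iff.mp hv with rfl | rfl
        · exact absurd (matched_of_mem he' hv') ha
        · exact endpoint_covered hM hx (Sym2.mem_mk_left _ _) (Set.mem_singleton _) e' he' hv'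
    have habM' : s(R.va i, R.vb i) ∈ M' := Or.inr rfl
    have hI : ∀ v ∈ ({R.va i, R.vb i} : Set R.HV),
        rank R.H R.prefH M' v < rank R.H R.prefH M v := by
      rintro v (rfl | rfl)
      · rw [rank_eq_of_mem hM' habM', rank_eq_of_unmatched ha]
        have : R.prefH (R.va i) (R.vb i) = 1 := R.pref_ab i
        omega
      · rw [rank_eq_of_mem hM' (by rwa [Sym2.eq_swap] at habM'),
          rank_eq_of_mem hM hx]
        have h1 : R.prefH (R.vb i) (R.va i) = 1 := R.pref_ba i
        have h2 : R.prefH (R.vb i) x = R.pref (.b i) x.1 := rfl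
        omega
    refine beats hpop hM' {R.va i, R.vb i} {x} hI ?_ ?_
    · apply hWb_tool hM hM' _ _ hI
      intro v hvI hvW w
      apply untouched_iff
      · rintro e rfl hve
        rcases Sym2.mem_iff.mp hve with rfl | rfl
        · exact hvI (Or.inr rfl)
        · exact hvW rfl
      · rintro e rfl hve
        rcases Sym2.mem_iff.mp hve with rfl | rfl
        · exact hvI (Or.inl rfl)
        · exact hvI (Or.inr rfl)
    · rw [Set.ncard_singleton, Set.ncard_pair hab]
      omega
  · set M' := (M \ (∅ : Set (Sym2 R.HV))) ∪ {s(R.va i, R.vb i)} with hM'def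
    have hM' : IsMatching R.H M' := by
      apply matching_diff_union hM
      · rintro e rfl
        exact (SimpleGraph.mem_edgeSet _).mpr (R.H_adj_ab i)
      · rintro e rfl e' rfl hne
        exact absurd rfl hne
      · rintro e rfl v hv e' he' hv'
        rcases Sym2.mem_iff.mp hv with rfl | rfl
        · exact absurd (matched_of_mem he' hv') ha
        · exact absurd (matched_of_mem he' hv') hb
    have habM' : s(R.va i, R.vb i) ∈ M' := Or.inr rfl
    have hI : ∀ v ∈ ({R.va i, R.vb i} : Set R.HV),
        rank R.H R.prefH M' v < rank R.H R.prefH M v := by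
      rintro v (rfl | rfl)
      · rw [rank_eq_of_mem hM' habM', rank_eq_of_unmatched ha]
        have : R.prefH (R.va i) (R.vb i) = 1 := R.pref_ab i
        omega
      · rw [rank_eq_of_mem hM' (by rwa [Sym2.eq_swap] at habM'),
          rank_eq_of_unmatched hb]
        have : R.prefH (R.vb i) (R.va i) = 1 := R.pref_ba i
        omega
    refine beats hpop hM' {R.va i, R.vb i} ∅ hI ?_ ?_
    · apply hWb_tool hM hM' _ _ hI
      intro v hvI hvW w
      apply untouched_iff
      · rintro e he
        exact absurd he (Set.notMem_empty e)
      · rintro e rfl hve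
        rcases Sym2.mem_iff.mp hve with rfl | rfl
        · exact hvI (Or.inl rfl)
        · exact hvI (Or.inr rfl)
    · rw [Set.ncard_empty, Set.ncard_pair hab]
      omega


lemma not_pop_B2 {M : Set (Sym2 R.HV)} {i j : V} (hp : s(i, j) ∈ R.P)
    (hpop : IsPopular R.H R.prefH M)
    (hbi : s(R.va i, R.vb i) ∈ M) (hbj : s(R.va j, R.vb j) ∈ M) : False := by
  have hfin : Finite R.HV := R.hv_finite
  have hM : IsMatching R.H M := hpop.1
  have hij : i ≠ j := R.pair_ne hp
  have hp' : s(j, i) ∈ R.P := R.pair_swap hp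
  -- neighborhood size bounds
  have hNd : 3 ≤ (R.H.neighborSet (R.vd j)).ncard := by
    have hsub : ({R.va j, R.vc i, R.vf j i hp'} : Set R.HV) ⊆ R.H.neighborSet (R.vd j) := by
      rintro v (rfl | rfl | rfl)
      · exact R.H_adj_da j
      · exact (R.H_adj_cd hp).symm
      · exact R.H_adj_df hp'
    have e1 : R.va j ∉ ({R.vc i, R.vf j i hp'} : Set R.HV) := by
      simp [Reduction.va, Reduction.vc, Reduction.vf]
    have e2 : R.vc i ≠ R.vf j i hp' := by simp [Reduction.vc, Reduction.vf]
    have := Set.ncard_le_ncard hsub (Set.toFinite _)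
    rwa [Set.ncard_insert_of_notMem e1 (Set.toFinite _), Set.ncard_pair e2] at this
  have hNc : 4 ≤ (R.H.neighborSet (R.vc i)).ncard := by
    have hsub : ({R.va i, R.vb i, R.vd j, R.vf j i hp'} : Set R.HV) ⊆
        R.H.neighborSet (R.vc i) := by
      rintro v (rfl | rfl | rfl | rfl)
      · exact (R.H_adj_ac i).symm
      · exact R.H_adj_cb i
      · exact R.H_adj_cd hp
      · exact (R.H_adj_fc hp').symm
    have e1 : R.va i ∉ ({R.vb i, R.vd j, R.vf j i hp'} : Set R.HV) := by
      simp [Reduction.va, Reduction.vb, Reduction.vd, Reduction.vf]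
    have e2 : R.vb i ∉ ({R.vd j, R.vf j i hp'} : Set R.HV) := by
      simp [Reduction.vb, Reduction.vd, Reduction.vf]
    have e3 : R.vd j ≠ R.vf j i hp' := by simp [Reduction.vd, Reduction.vf]
    have := Set.ncard_le_ncard hsub (Set.toFinite _)
    rwa [Set.ncard_insert_of_notMem e1 (Set.toFinite _),
      Set.ncard_insert_of_notMem e2 (Set.toFinite _), Set.ncard_pair e3] at this
  have hNf : 2 ≤ (R.H.neighborSet (R.vf j i hp')).ncard := by
    have hsub : ({R.vd j, R.vc i} : Set R.HV) ⊆ R.H.neighborSet (R.vf j i hp') := by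
      rintro v (rfl | rfl)
      · exact (R.H_adj_df hp').symm
      · exact R.H_adj_fc hp'
    have e1 : R.vd j ≠ R.vc i := by simp [Reduction.vd, Reduction.vc]
    have := Set.ncard_le_ncard hsub (Set.toFinite _)
    rwa [Set.ncard_pair e1] at this
  -- partner restrictions
  have hCp : ∀ z : R.HV, s(R.vc i, z) ∈ M → z = R.vd j ∨ z = R.vf j i hp' := by
    intro z hz
    rcases R.adj_c hp (R.adj_of_mem hM hz) with rfl | rfl | rfl | rfl
    · have := partner_unique hM (by rwa [Sym2.eq_swap] at hz) hbi
      simp [Reduction.vc, Reduction.vb] at this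
    · have := partner_unique hM (by rwa [Sym2.eq_swap] at hz)
        (by rwa [Sym2.eq_swap] at hbi)
      simp [Reduction.vc, Reduction.va] at this
    · exact Or.inl rfl
    · exact Or.inr rfl
  have hDp : ∀ z : R.HV, s(R.vd j, z) ∈ M → z = R.vc i ∨ z = R.vf j i hp' := by
    intro z hz
    rcases R.adj_d hp' (R.adj_of_mem hM hz) with rfl | rfl | rfl
    · have := partner_unique hM (by rwa [Sym2.eq_swap] at hz) hbj
      simp [Reduction.vd, Reduction.vb] at this
    · exact Or.inl rfl
    · exact Or.inr rfl
  by_cases hD : Matched M (R.vd j)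
  · obtain ⟨y, hy⟩ := hD
    rcases hDp y hy with rfl | rfl
    · -- (d_j, c_i) ∈ M ; f_ji unmatched; M' = M - (c_i,d_j) + (c_i,f_ji)
      have hF : ¬ Matched M (R.vf j i hp') := by
        rintro ⟨z, hz⟩
        rcases R.adj_f hp' (R.adj_of_mem hM hz) with rfl | rfl
        · have := partner_unique hM (by rwa [Sym2.eq_swap] at hz) hy
          simp [Reduction.vf, Reduction.vc] at this
        · have := partner_unique hM (by rwa [Sym2.eq_swap] at hz)
            (by rwa [Sym2.eq_swap] at hy)
          simp [Reduction.vf, Reduction.vd] at this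
      set M' := (M \ {s(R.vd j, R.vc i)}) ∪ {s(R.vc i, R.vf j i hp')} with hM'def
      have hM' : IsMatching R.H M' := by
        apply matching_diff_union hM
        · rintro e rfl
          exact (SimpleGraph.mem_edgeSet _).mpr (R.H_adj_fc hp').symm
        · rintro e rfl e' rfl hne
          exact absurd rfl hne
        · rintro e rfl v hv e' he' hv'
          rcases Sym2.mem_iff.mp hv with rfl | rfl
          · exact endpoint_covered hM hy (Sym2.mem_mk_right _ _) (Set.mem_singleton _)
              e' he' hv'
          · exact endpoint_unmatched hF e' he' hv'
      have hE1 : s(R.vc i, R.vf j i hp') ∈ M' := Or.inr rfl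
      have hI : ∀ v ∈ ({R.vc i, R.vf j i hp'} : Set R.HV),
          rank R.H R.prefH M' v < rank R.H R.prefH M v := by
        rintro v (rfl | rfl)
        · rw [rank_eq_of_mem hM' hE1, rank_eq_of_mem hM (by rwa [Sym2.eq_swap] at hy)]
          have h1 : R.prefH (R.vc i) (R.vf j i hp') = 3 := R.pref_cf i j hp
          have h2 : R.prefH (R.vc i) (R.vd j) = 4 := R.pref_cd i j hp
          omega
        · rw [rank_eq_of_mem hM' (by rwa [Sym2.eq_swap] at hE1), rank_eq_of_unmatched hF]
          have h1 : R.prefH (R.vf j i hp') (R.vc i) = 2 := R.pref_fc j i hp'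
          omega
      refine beats hpop hM' _ {R.vd j} hI ?_ ?_
      · apply hWb_tool hM hM' _ _ hI
        intro v hvI hvW y
        apply untouched_iff
        · rintro e rfl hve <;> rcases Sym2.mem_iff.mp hve with rfl | rfl
          · exact hvW rfl
          · exact hvI (Or.inl rfl)
        · rintro e rfl hve <;> rcases Sym2.mem_iff.mp hve with rfl | rfl
          · exact hvI (Or.inl rfl)
          · exact hvI (Or.inr rfl)
      · have e1 : R.vc i ≠ R.vf j i hp' := by simp [Reduction.vc, Reduction.vf]
        rw [Set.ncard_singleton, Set.ncard_pair e1]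
        omega
    · -- (d_j, f_ji) ∈ M ; c_i unmatched ; M' = M - (d_j,f_ji) + (c_i,d_j)
      have hC : ¬ Matched M (R.vc i) := by
        rintro ⟨z, hz⟩
        rcases hCp z hz with rfl | rfl
        · have := partner_unique hM (by rwa [Sym2.eq_swap] at hz) hy
          simp [Reduction.vc, Reduction.vf] at this
        · have := partner_unique hM (by rwa [Sym2.eq_swap] at hz)
            (by rwa [Sym2.eq_swap] at hy)
          simp [Reduction.vc, Reduction.vd] at this
      set M' := (M \ {s(R.vd j, R.vf j i hp')}) ∪ {s(R.vc i, R.vd j)} with hM'def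
      have hM' : IsMatching R.H M' := by
        apply matching_diff_union hM
        · rintro e rfl
          exact (SimpleGraph.mem_edgeSet _).mpr (R.H_adj_cd hp)
        · rintro e rfl e' rfl hne
          exact absurd rfl hne
        · rintro e rfl v hv e' he' hv'
          rcases Sym2.mem_iff.mp hv with rfl | rfl
          · exact endpoint_unmatched hC e' he' hv'
          · exact endpoint_covered hM hy (Sym2.mem_mk_left _ _) (Set.mem_singleton _)
              e' he' hv'
      have hE1 : s(R.vc i, R.vd j) ∈ M' := Or.inr rfl
      have hI : ∀ v ∈ ({R.vc i, R.vd j} : Set R.HV),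
          rank R.H R.prefH M' v < rank R.H R.prefH M v := by
        rintro v (rfl | rfl)
        · rw [rank_eq_of_mem hM' hE1, rank_eq_of_unmatched hC]
          have h1 : R.prefH (R.vc i) (R.vd j) = 4 := R.pref_cd i j hp
          omega
        · rw [rank_eq_of_mem hM' (by rwa [Sym2.eq_swap] at hE1), rank_eq_of_mem hM hy]
          have h1 : R.prefH (R.vd j) (R.vc i) = 2 := R.pref_dc j i hp'
          have h2 : R.prefH (R.vd j) (R.vf j i hp') = 3 := R.pref_df j i hp'
          omega
      refine beats hpop hM' _ {R.vf j i hp'} hI ?_ ?_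
      · apply hWb_tool hM hM' _ _ hI
        intro v hvI hvW y
        apply untouched_iff
        · rintro e rfl hve <;> rcases Sym2.mem_iff.mp hve with rfl | rfl
          · exact hvI (Or.inr rfl)
          · exact hvW rfl
        · rintro e rfl hve <;> rcases Sym2.mem_iff.mp hve with rfl | rfl
          · exact hvI (Or.inl rfl)
          · exact hvI (Or.inr rfl)
      · have e1 : R.vc i ≠ R.vd j := by simp [Reduction.vc, Reduction.vd]
        rw [Set.ncard_singleton, Set.ncard_pair e1]
        omega
  · by_cases hC : Matched M (R.vc i)
    · -- (c_i, f_ji) ∈ M ; M' = M - (c_i,f_ji) + (d_j,f_ji)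
      obtain ⟨z, hz⟩ := hC
      have hzf : z = R.vf j i hp' := by
        rcases hCp z hz with rfl | rfl
        · exact absurd (matched_of_mem hz (Sym2.mem_mk_right _ _)) hD
        · rfl
      subst hzf
      set M' := (M \ {s(R.vc i, R.vf j i hp')}) ∪ {s(R.vd j, R.vf j i hp')} with hM'def
      have hM' : IsMatching R.H M' := by
        apply matching_diff_union hM
        · rintro e rfl
          exact (SimpleGraph.mem_edgeSet _).mpr (R.H_adj_df hp')
        · rintro e rfl e' rfl hne
          exact absurd rfl hne
        · rintro e rfl v hv e' he' hv'
          rcases Sym2.mem_iff.mp hv with rfl | rfl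
          · exact endpoint_unmatched hD e' he' hv'
          · exact endpoint_covered hM hz (Sym2.mem_mk_right _ _) (Set.mem_singleton _)
              e' he' hv'
      have hE1 : s(R.vd j, R.vf j i hp') ∈ M' := Or.inr rfl
      have hI : ∀ v ∈ ({R.vd j, R.vf j i hp'} : Set R.HV),
          rank R.H R.prefH M' v < rank R.H R.prefH M v := by
        rintro v (rfl | rfl)
        · rw [rank_eq_of_mem hM' hE1, rank_eq_of_unmatched hD]
          have h1 : R.prefH (R.vd j) (R.vf j i hp') = 3 := R.pref_df j i hp'
          omega
        · rw [rank_eq_of_mem hM' (by rwa [Sym2.eq_swap] at hE1),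
            rank_eq_of_mem hM (by rwa [Sym2.eq_swap] at hz)]
          have h1 : R.prefH (R.vf j i hp') (R.vd j) = 1 := R.pref_fd j i hp'
          have h2 : R.prefH (R.vf j i hp') (R.vc i) = 2 := R.pref_fc j i hp'
          omega
      refine beats hpop hM' _ {R.vc i} hI ?_ ?_
      · apply hWb_tool hM hM' _ _ hI
        intro v hvI hvW y
        apply untouched_iff
        · rintro e rfl hve <;> rcases Sym2.mem_iff.mp hve with rfl | rfl
          · exact hvW rfl
          · exact hvI (Or.inr rfl)
        · rintro e rfl hve <;> rcases Sym2.mem_iff.mp hve with rfl | rfl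
          · exact hvI (Or.inl rfl)
          · exact hvI (Or.inr rfl)
      · have e1 : R.vd j ≠ R.vf j i hp' := by simp [Reduction.vd, Reduction.vf]
        rw [Set.ncard_singleton, Set.ncard_pair e1]
        omega
    · -- c_i, d_j unmatched ⇒ f_ji unmatched too ; M' = M + (d_j,f_ji)
      have hF : ¬ Matched M (R.vf j i hp') := by
        rintro ⟨z, hz⟩
        rcases R.adj_f hp' (R.adj_of_mem hM hz) with rfl | rfl
        · exact hD (matched_of_mem hz (Sym2.mem_mk_right _ _))
        · exact hC (matched_of_mem hz (Sym2.mem_mk_right _ _))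
      set M' := (M \ (∅ : Set (Sym2 R.HV))) ∪ {s(R.vd j, R.vf j i hp')} with hM'def
      have hM' : IsMatching R.H M' := by
        apply matching_diff_union hM
        · rintro e rfl
          exact (SimpleGraph.mem_edgeSet _).mpr (R.H_adj_df hp')
        · rintro e rfl e' rfl hne
          exact absurd rfl hne
        · rintro e rfl v hv e' he' hv'
          rcases Sym2.mem_iff.mp hv with rfl | rfl
          · exact endpoint_unmatched hD e' he' hv'
          · exact endpoint_unmatched hF e' he' hv'
      have hE1 : s(R.vd j, R.vf j i hp') ∈ M' := Or.inr rfl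
      have hI : ∀ v ∈ ({R.vd j, R.vf j i hp'} : Set R.HV),
          rank R.H R.prefH M' v < rank R.H R.prefH M v := by
        rintro v (rfl | rfl)
        · rw [rank_eq_of_mem hM' hE1, rank_eq_of_unmatched hD]
          have h1 : R.prefH (R.vd j) (R.vf j i hp') = 3 := R.pref_df j i hp'
          omega
        · rw [rank_eq_of_mem hM' (by rwa [Sym2.eq_swap] at hE1), rank_eq_of_unmatched hF]
          have h1 : R.prefH (R.vf j i hp') (R.vd j) = 1 := R.pref_fd j i hp'
          omega
      refine beats hpop hM' _ ∅ hI ?_ ?_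
      · apply hWb_tool hM hM' _ _ hI
        intro v hvI hvW y
        apply untouched_iff
        · rintro e he
          exact absurd he (Set.notMem_empty e)
        · rintro e rfl hve <;> rcases Sym2.mem_iff.mp hve with rfl | rfl
          · exact hvI (Or.inl rfl)
          · exact hvI (Or.inr rfl)
      · have e1 : R.vd j ≠ R.vf j i hp' := by simp [Reduction.vd, Reduction.vf]
        rw [Set.ncard_empty, Set.ncard_pair e1]
        omega

lemma not_pop_ac {M : Set (Sym2 R.HV)} {i : V} (hpop : IsPopular R.H R.prefH M)
    (hci : s(R.va i, R.vc i) ∈ M) : False := by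
  have hfin : Finite R.HV := R.hv_finite
  have hM : IsMatching R.H M := hpop.1
  by_cases hb : Matched M (R.vb i)
  · obtain ⟨x, hx⟩ := hb
    have hxa : x ≠ R.va i := by
      rintro rfl
      have := partner_unique hM (by rwa [Sym2.eq_swap] at hx) hci
      simp [Reduction.vb, Reduction.vc] at this
    have hxc : x ≠ R.vc i := by
      rintro rfl
      have := partner_unique hM (by rwa [Sym2.eq_swap] at hx)
        (by rwa [Sym2.eq_swap] at hci)
      simp [Reduction.vb, Reduction.va] at this
    obtain ⟨k, hk, rfl⟩ : ∃ (k : V) (hk : R.G.Adj i k), x = R.vu i k hk := by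
      rcases R.adj_b (R.adj_of_mem hM hx) with rfl | rfl | h
      · exact absurd rfl hxa
      · exact absurd rfl hxc
      · exact h
    have hik : i ≠ k := hk.ne
    have hbx : 2 ≤ R.pref (.b i) (Gad.u i k) := by
      have := (R.pref_bu i).mapsTo ⟨k, hk, rfl⟩
      exact (Set.mem_Icc.mp this).1
    -- (R.vu k i hk.symm)'s partner is b_k or nothing
    have hwp : ∀ y : R.HV, s((R.vu k i hk.symm), y) ∈ M → y = R.vb k := by
      intro y hy
      rcases R.adj_u hk.symm (R.adj_of_mem hM hy) with rfl | rfl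
      · rfl
      · have := partner_unique hM (by rwa [Sym2.eq_swap] at hy)
          (by rwa [Sym2.eq_swap] at hx)
        simp [Reduction.vu, Reduction.vb, hik] at this
    have key : ∀ (Rem : Set (Sym2 R.HV)) (Wb : Set R.HV),
        Rem ⊆ M →
        s(R.va i, R.vc i) ∈ Rem → s(R.vb i, R.vu i k hk) ∈ Rem →
        (∀ e' ∈ M, (R.vu k i hk.symm) ∈ e' → e' ∈ Rem) →
        (∀ v : R.HV, v ∉ ({R.va i, R.vb i, R.vu i k hk, (R.vu k i hk.symm)} : Set R.HV) → v ∉ Wb →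
          ∀ e ∈ Rem, v ∉ e) →
        1 < rank R.H R.prefH M (R.vu k i hk.symm) →
        R.vc i ∈ Wb → Wb.ncard ≤ 2 → False := by
      intro Rem Wb hRsub hR1 hR2 hR3 hcov hrkw hWc hWcard
      set M' := (M \ Rem) ∪ {s(R.va i, R.vb i), s(R.vu i k hk, (R.vu k i hk.symm))} with hM'def
      have hM' : IsMatching R.H M' := by
        apply matching_diff_union hM
        · rintro e (rfl | rfl)
          · exact (SimpleGraph.mem_edgeSet _).mpr (R.H_adj_ab i)
          · exact (SimpleGraph.mem_edgeSet _).mpr (R.H_adj_uu hk)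
        · rintro e (rfl | rfl) e' (rfl | rfl) hne v hv hv' <;>
            [exact absurd rfl hne; skip; skip; exact absurd rfl hne] <;>
            rcases Sym2.mem_iff.mp hv with rfl | rfl <;>
            simp_all [Sym2.mem_iff, Reduction.va, Reduction.vb, Reduction.vu, hik]
        · rintro e (rfl | rfl) v hv e' he' hv' <;>
            rcases Sym2.mem_iff.mp hv with rfl | rfl
          · exact endpoint_covered hM hci (Sym2.mem_mk_left _ _) hR1 e' he' hv'
          · exact endpoint_covered hM hx (Sym2.mem_mk_left _ _) hR2 e' he' hv'
          · exact endpoint_covered hM hx (Sym2.mem_mk_right _ _) hR2 e' he' hv'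
          · exact hR3 e' he' hv'
      have hAb : s(R.va i, R.vb i) ∈ M' := Or.inr (Or.inl rfl)
      have hUu : s(R.vu i k hk, (R.vu k i hk.symm)) ∈ M' := Or.inr (Or.inr rfl)
      have hI : ∀ v ∈ ({R.va i, R.vb i, R.vu i k hk, (R.vu k i hk.symm)} : Set R.HV),
          rank R.H R.prefH M' v < rank R.H R.prefH M v := by
        rintro v (rfl | rfl | rfl | rfl)
        · rw [rank_eq_of_mem hM' hAb, rank_eq_of_mem hM hci]
          have h1 : R.prefH (R.va i) (R.vb i) = 1 := R.pref_ab i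
          have h2 : R.prefH (R.va i) (R.vc i) = 2 := R.pref_ac i
          omega
        · rw [rank_eq_of_mem hM' (by rwa [Sym2.eq_swap] at hAb), rank_eq_of_mem hM hx]
          have h1 : R.prefH (R.vb i) (R.va i) = 1 := R.pref_ba i
          have h2 : R.prefH (R.vb i) (R.vu i k hk) = R.pref (.b i) (Gad.u i k) := rfl
          omega
        · rw [rank_eq_of_mem hM' hUu,
            rank_eq_of_mem hM (by rwa [Sym2.eq_swap] at hx)]
          have h1 : R.prefH (R.vu i k hk) (R.vu k i hk.symm) = 1 := R.pref_uu i k hk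
          have h2 : R.prefH (R.vu i k hk) (R.vb i) = 2 := R.pref_ub i k hk
          omega
        · rw [rank_eq_of_mem hM' (by rwa [Sym2.eq_swap] at hUu)]
          have h1 : R.prefH (R.vu k i hk.symm) (R.vu i k hk) = 1 := R.pref_uu k i hk.symm
          omega
      refine beats hpop hM' _ Wb hI ?_ ?_
      · apply hWb_tool hM hM' _ _ hI
        intro v hvI hvW y
        apply untouched_iff
        · exact hcov v hvI hvW
        · rintro e (rfl | rfl) hve <;> rcases Sym2.mem_iff.mp hve with rfl | rfl
          · exact hvI (Or.inl rfl)
          · exact hvI (Or.inr (Or.inl rfl))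
          · exact hvI (Or.inr (Or.inr (Or.inl rfl)))
          · exact hvI (Or.inr (Or.inr (Or.inr rfl)))
      · have e1 : R.va i ∉ ({R.vb i, R.vu i k hk, (R.vu k i hk.symm)} : Set R.HV) := by
          simp [Reduction.va, Reduction.vb, Reduction.vu]
        have e2 : R.vb i ∉ ({R.vu i k hk, (R.vu k i hk.symm)} : Set R.HV) := by
          simp [Reduction.vb, Reduction.vu]
        have e3 : R.vu i k hk ≠ (R.vu k i hk.symm) := by simp [Reduction.vu, hik]
        rw [Set.ncard_insert_of_notMem e1 (Set.toFinite _),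
          Set.ncard_insert_of_notMem e2 (Set.toFinite _), Set.ncard_pair e3]
        omega
    by_cases hw : Matched M (R.vu k i hk.symm)
    · obtain ⟨y, hy⟩ := hw
      obtain rfl := hwp y hy
      refine key {s(R.va i, R.vc i), s(R.vb i, R.vu i k hk), s((R.vu k i hk.symm), R.vb k)}
        {R.vc i, R.vb k} ?_ (Or.inl rfl) (Or.inr (Or.inl rfl)) ?_ ?_ ?_ (Or.inl rfl) ?_
      · rintro e (rfl | rfl | rfl)
        · exact hci
        · exact hx
        · exact hy
      · exact endpoint_covered hM hy (Sym2.mem_mk_left _ _) (Or.inr (Or.inr rfl))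
      · intro v hvI hvW
        rintro e (rfl | rfl | rfl) hve <;> rcases Sym2.mem_iff.mp hve with rfl | rfl
        · exact hvI (Or.inl rfl)
        · exact hvW (Or.inl rfl)
        · exact hvI (Or.inr (Or.inl rfl))
        · exact hvI (Or.inr (Or.inr (Or.inl rfl)))
        · exact hvI (Or.inr (Or.inr (Or.inr rfl)))
        · exact hvW (Or.inr rfl)
      · rw [rank_eq_of_mem hM hy]
        have : R.prefH (R.vu k i hk.symm) (R.vb k) = 2 := R.pref_ub k i hk.symm
        omega
      · have : R.vc i ≠ R.vb k := by simp [Reduction.vc, Reduction.vb]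
        rw [Set.ncard_pair this]
    · refine key {s(R.va i, R.vc i), s(R.vb i, R.vu i k hk)}
        {R.vc i} ?_ (Or.inl rfl) (Or.inr rfl) ?_ ?_ ?_ rfl ?_
      · rintro e (rfl | rfl)
        · exact hci
        · exact hx
      · exact endpoint_unmatched hw
      · intro v hvI hvW
        rintro e (rfl | rfl) hve <;> rcases Sym2.mem_iff.mp hve with rfl | rfl
        · exact hvI (Or.inl rfl)
        · exact hvW rfl
        · exact hvI (Or.inr (Or.inl rfl))
        · exact hvI (Or.inr (Or.inr (Or.inl rfl)))
      · rw [rank_eq_of_unmatched hw]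
        have : 0 < (R.H.neighborSet (R.vu k i hk.symm)).ncard :=
          (Set.ncard_pos (Set.toFinite _)).mpr ⟨R.vu i k hk, (R.H_adj_uu hk).symm⟩
        omega
      · rw [Set.ncard_singleton]
        omega
  · set M' := (M \ {s(R.va i, R.vc i)}) ∪ {s(R.va i, R.vb i)} with hM'def
    have hM' : IsMatching R.H M' := by
      apply matching_diff_union hM
      · rintro e rfl
        exact (SimpleGraph.mem_edgeSet _).mpr (R.H_adj_ab i)
      · rintro e rfl e' rfl hne
        exact absurd rfl hne
      · rintro e rfl v hv e' he' hv'
        rcases Sym2.mem_iff.mp hv with rfl | rfl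
        · exact endpoint_covered hM hci (Sym2.mem_mk_left _ _) (Set.mem_singleton _)
            e' he' hv'
        · exact absurd (matched_of_mem he' hv') hb
    have hAb : s(R.va i, R.vb i) ∈ M' := Or.inr rfl
    have hI : ∀ v ∈ ({R.va i, R.vb i} : Set R.HV),
        rank R.H R.prefH M' v < rank R.H R.prefH M v := by
      rintro v (rfl | rfl)
      · rw [rank_eq_of_mem hM' hAb, rank_eq_of_mem hM hci]
        have h1 : R.prefH (R.va i) (R.vb i) = 1 := R.pref_ab i
        have h2 : R.prefH (R.va i) (R.vc i) = 2 := R.pref_ac i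
        omega
      · rw [rank_eq_of_mem hM' (by rwa [Sym2.eq_swap] at hAb), rank_eq_of_unmatched hb]
        have h1 : R.prefH (R.vb i) (R.va i) = 1 := R.pref_ba i
        have h2 : 0 < (R.H.neighborSet (R.vb i)).ncard :=
          (Set.ncard_pos (Set.toFinite _)).mpr ⟨R.va i, (R.H_adj_ab i).symm⟩
        omega
    refine beats hpop hM' _ {R.vc i} hI ?_ ?_
    · apply hWb_tool hM hM' _ _ hI
      intro v hvI hvW y
      apply untouched_iff
      · rintro e rfl hve <;> rcases Sym2.mem_iff.mp hve with rfl | rfl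
        · exact hvI (Or.inl rfl)
        · exact hvW rfl
      · rintro e rfl hve <;> rcases Sym2.mem_iff.mp hve with rfl | rfl
        · exact hvI (Or.inl rfl)
        · exact hvI (Or.inr rfl)
    · have : R.va i ≠ R.vb i := (R.H_adj_ab i).ne
      rw [Set.ncard_singleton, Set.ncard_pair this]
      omega

lemma not_pop_dd {M : Set (Sym2 R.HV)} {i j : V} (hp : s(i, j) ∈ R.P)
    (hpop : IsPopular R.H R.prefH M)
    (hdi : s(R.va i, R.vd i) ∈ M) (hdj : s(R.va j, R.vd j) ∈ M) : False := by
  have hfin : Finite R.HV := R.hv_finite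
  have hM : IsMatching R.H M := hpop.1
  have hij : i ≠ j := R.pair_ne hp
  have hp' : s(j, i) ∈ R.P := R.pair_swap hp
  by_cases hc : Matched M (R.vc i)
  · obtain ⟨z, hz⟩ := hc
    have hza : z ≠ R.va i := by
      rintro rfl
      have := partner_unique hM (by rwa [Sym2.eq_swap] at hz) hdi
      simp [Reduction.vc, Reduction.vd] at this
    have hzdj : z ≠ R.vd j := by
      rintro rfl
      have := partner_unique hM (by rwa [Sym2.eq_swap] at hz)
        (by rwa [Sym2.eq_swap] at hdj)
      simp [Reduction.vc, Reduction.va] at this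
    have hzcases : z = R.vb i ∨ z = R.vf j i hp' := by
      rcases R.adj_c hp (R.adj_of_mem hM hz) with rfl | rfl | rfl | rfl
      · exact absurd rfl hza
      · exact Or.inl rfl
      · exact absurd rfl hzdj
      · exact Or.inr rfl
    have hz2 : 2 ≤ R.pref (.c i) z.1 := by
      rcases hzcases with rfl | rfl
      · rw [show (R.vb i).1 = Gad.b i from rfl, R.pref_cb i]
      · rw [show (R.vf j i hp').1 = Gad.f j i from rfl, R.pref_cf i j hp]; omega
    have hzdi : z ≠ R.vd i := by
      rcases hzcases with rfl | rfl <;> simp [Reduction.vb, Reduction.vd, Reduction.vf]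
    -- f_ij's partner is c_j or nothing
    have hfp : ∀ y : R.HV, s(R.vf i j hp, y) ∈ M → y = R.vc j := by
      intro y hy
      rcases R.adj_f hp (R.adj_of_mem hM hy) with rfl | rfl
      · have := partner_unique hM (by rwa [Sym2.eq_swap] at hy)
          (by rwa [Sym2.eq_swap] at hdi)
        simp [Reduction.vf, Reduction.va] at this
      · rfl
    by_cases hf : Matched M (R.vf i j hp)
    · obtain ⟨y, hy⟩ := hf
      obtain rfl := hfp y hy
      -- big swap on both sides
      set M' := (M \ {s(R.va i, R.vd i), s(R.vc i, z), s(R.vf i j hp, R.vc j),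
        s(R.va j, R.vd j)}) ∪
        {s(R.va i, R.vc i), s(R.vd i, R.vf i j hp), s(R.va j, R.vc j)} with hM'def
      have hM' : IsMatching R.H M' := by
        apply matching_diff_union hM
        · rintro e (rfl | rfl | rfl)
          · exact (SimpleGraph.mem_edgeSet _).mpr (R.H_adj_ac i)
          · exact (SimpleGraph.mem_edgeSet _).mpr (R.H_adj_df hp)
          · exact (SimpleGraph.mem_edgeSet _).mpr (R.H_adj_ac j)
        · apply disj3
          · exact edge_core (by simp [Reduction.va, Reduction.vc, Reduction.vd])
              (by simp [Reduction.va, Reduction.vf])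
              (by simp [Reduction.vc, Reduction.vd])
              (by simp [Reduction.vc, Reduction.vf])
          · exact edge_core (by simp [Reduction.va, hij])
              (by simp [Reduction.va, Reduction.vc, hij])
              (by simp [Reduction.va, Reduction.vc, hij])
              (by simp [Reduction.vc, hij])
          · exact edge_core (by simp [Reduction.va, Reduction.vd, hij])
              (by simp [Reduction.vc, Reduction.vd, hij])
              (by simp [Reduction.va, Reduction.vf])
              (by simp [Reduction.vc, Reduction.vf])
        · rintro e (rfl | rfl | rfl) v hv e' he' hv' <;>
            rcases Sym2.mem_iff.mp hv with rfl | rfl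
          · exact endpoint_covered hM hdi (Sym2.mem_mk_left _ _) (Or.inl rfl) e' he' hv'
          · exact endpoint_covered hM hz (Sym2.mem_mk_left _ _)
              (Or.inr (Or.inl rfl)) e' he' hv'
          · exact endpoint_covered hM hdi (Sym2.mem_mk_right _ _) (Or.inl rfl) e' he' hv'
          · exact endpoint_covered hM hy (Sym2.mem_mk_left _ _)
              (Or.inr (Or.inr (Or.inl rfl))) e' he' hv'
          · exact endpoint_covered hM hdj (Sym2.mem_mk_left _ _)
              (Or.inr (Or.inr (Or.inr rfl))) e' he' hv'
          · exact endpoint_covered hM hy (Sym2.mem_mk_right _ _)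
              (Or.inr (Or.inr (Or.inl rfl))) e' he' hv'
      have hE1 : s(R.va i, R.vc i) ∈ M' := Or.inr (Or.inl rfl)
      have hE2 : s(R.vd i, R.vf i j hp) ∈ M' := Or.inr (Or.inr (Or.inl rfl))
      have hE3 : s(R.va j, R.vc j) ∈ M' := Or.inr (Or.inr (Or.inr rfl))
      have hI : ∀ v ∈ ({R.va i, R.vc i, R.vf i j hp, R.vc j, R.va j} : Set R.HV),
          rank R.H R.prefH M' v < rank R.H R.prefH M v := by
        rintro v (rfl | rfl | rfl | rfl | rfl)
        · rw [rank_eq_of_mem hM' hE1, rank_eq_of_mem hM hdi]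
          have h1 : R.prefH (R.va i) (R.vc i) = 2 := R.pref_ac i
          have h2 : R.prefH (R.va i) (R.vd i) = 3 := R.pref_ad i
          omega
        · rw [rank_eq_of_mem hM' (by rwa [Sym2.eq_swap] at hE1), rank_eq_of_mem hM hz]
          have h1 : R.prefH (R.vc i) (R.va i) = 1 := R.pref_ca i
          have h2 : R.prefH (R.vc i) z = R.pref (.c i) z.1 := rfl
          omega
        · rw [rank_eq_of_mem hM' (by rwa [Sym2.eq_swap] at hE2), rank_eq_of_mem hM hy]
          have h1 : R.prefH (R.vf i j hp) (R.vd i) = 1 := R.pref_fd i j hp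
          have h2 : R.prefH (R.vf i j hp) (R.vc j) = 2 := R.pref_fc i j hp
          omega
        · rw [rank_eq_of_mem hM' (by rwa [Sym2.eq_swap] at hE3),
            rank_eq_of_mem hM (by rwa [Sym2.eq_swap] at hy)]
          have h1 : R.prefH (R.vc j) (R.va j) = 1 := R.pref_ca j
          have h2 : R.prefH (R.vc j) (R.vf i j hp) = 3 := R.pref_cf j i hp'
          omega
        · rw [rank_eq_of_mem hM' hE3, rank_eq_of_mem hM hdj]
          have h1 : R.prefH (R.va j) (R.vc j) = 2 := R.pref_ac j
          have h2 : R.prefH (R.va j) (R.vd j) = 3 := R.pref_ad j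
          omega
      refine beats hpop hM' _ {R.vd i, z, R.vd j} hI ?_ ?_
      · apply hWb_tool hM hM' _ _ hI
        intro v hvI hvW y
        apply untouched_iff
        · rintro e (rfl | rfl | rfl | rfl) hve <;>
            rcases Sym2.mem_iff.mp hve with rfl | rfl
          · exact hvI (Or.inl rfl)
          · exact hvW (Or.inl rfl)
          · exact hvI (Or.inr (Or.inl rfl))
          · exact hvW (Or.inr (Or.inl rfl))
          · exact hvI (Or.inr (Or.inr (Or.inl rfl)))
          · exact hvI (Or.inr (Or.inr (Or.inr (Or.inl rfl))))
          · exact hvI (Or.inr (Or.inr (Or.inr (Or.inr rfl))))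
          · exact hvW (Or.inr (Or.inr rfl))
        · rintro e (rfl | rfl | rfl) hve <;>
            rcases Sym2.mem_iff.mp hve with rfl | rfl
          · exact hvI (Or.inl rfl)
          · exact hvI (Or.inr (Or.inl rfl))
          · exact hvW (Or.inl rfl)
          · exact hvI (Or.inr (Or.inr (Or.inl rfl)))
          · exact hvI (Or.inr (Or.inr (Or.inr (Or.inr rfl))))
          · exact hvI (Or.inr (Or.inr (Or.inr (Or.inl rfl))))
      · have e1 : R.va i ∉ ({R.vc i, R.vf i j hp, R.vc j, R.va j} : Set R.HV) := by
          simp [Reduction.va, Reduction.vc, Reduction.vf, hij]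
        have e2 : R.vc i ∉ ({R.vf i j hp, R.vc j, R.va j} : Set R.HV) := by
          simp [Reduction.va, Reduction.vc, Reduction.vf, hij]
        have e3 : R.vf i j hp ∉ ({R.vc j, R.va j} : Set R.HV) := by
          simp [Reduction.va, Reduction.vc, Reduction.vf]
        have e4 : R.vc j ≠ R.va j := by simp [Reduction.va, Reduction.vc]
        have w1 : R.vd i ∉ ({z, R.vd j} : Set R.HV) := by
          rcases hzcases with rfl | rfl <;>
            simp [Reduction.vb, Reduction.vd, Reduction.vf, hij]
        have w2 : z ≠ R.vd j := hzdj
        rw [Set.ncard_insert_of_notMem e1 (Set.toFinite _),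
          Set.ncard_insert_of_notMem e2 (Set.toFinite _),
          Set.ncard_insert_of_notMem e3 (Set.toFinite _), Set.ncard_pair e4,
          Set.ncard_insert_of_notMem w1 (Set.toFinite _), Set.ncard_pair w2]
        omega
    · -- f_ij unmatched
      set M' := (M \ {s(R.va i, R.vd i), s(R.vc i, z)}) ∪
        {s(R.va i, R.vc i), s(R.vd i, R.vf i j hp)} with hM'def
      have hM' : IsMatching R.H M' := by
        apply matching_diff_union hM
        · rintro e (rfl | rfl)
          · exact (SimpleGraph.mem_edgeSet _).mpr (R.H_adj_ac i)
          · exact (SimpleGraph.mem_edgeSet _).mpr (R.H_adj_df hp)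
        · apply disj2
          exact edge_core (by simp [Reduction.va, Reduction.vd])
            (by simp [Reduction.va, Reduction.vf])
            (by simp [Reduction.vc, Reduction.vd])
            (by simp [Reduction.vc, Reduction.vf])
        · rintro e (rfl | rfl) v hv e' he' hv' <;>
            rcases Sym2.mem_iff.mp hv with rfl | rfl
          · exact endpoint_covered hM hdi (Sym2.mem_mk_left _ _) (Or.inl rfl) e' he' hv'
          · exact endpoint_covered hM hz (Sym2.mem_mk_left _ _) (Or.inr rfl) e' he' hv'
          · exact endpoint_covered hM hdi (Sym2.mem_mk_right _ _) (Or.inl rfl) e' he' hv'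
          · exact endpoint_unmatched hf e' he' hv'
      have hE1 : s(R.va i, R.vc i) ∈ M' := Or.inr (Or.inl rfl)
      have hE2 : s(R.vd i, R.vf i j hp) ∈ M' := Or.inr (Or.inr rfl)
      have hI : ∀ v ∈ ({R.va i, R.vc i, R.vf i j hp} : Set R.HV),
          rank R.H R.prefH M' v < rank R.H R.prefH M v := by
        rintro v (rfl | rfl | rfl)
        · rw [rank_eq_of_mem hM' hE1, rank_eq_of_mem hM hdi]
          have h1 : R.prefH (R.va i) (R.vc i) = 2 := R.pref_ac i
          have h2 : R.prefH (R.va i) (R.vd i) = 3 := R.pref_ad i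
          omega
        · rw [rank_eq_of_mem hM' (by rwa [Sym2.eq_swap] at hE1), rank_eq_of_mem hM hz]
          have h1 : R.prefH (R.vc i) (R.va i) = 1 := R.pref_ca i
          have h2 : R.prefH (R.vc i) z = R.pref (.c i) z.1 := rfl
          omega
        · rw [rank_eq_of_mem hM' (by rwa [Sym2.eq_swap] at hE2), rank_eq_of_unmatched hf]
          have h1 : R.prefH (R.vf i j hp) (R.vd i) = 1 := R.pref_fd i j hp
          have h2 : 0 < (R.H.neighborSet (R.vf i j hp)).ncard :=
            (Set.ncard_pos (Set.toFinite _)).mpr ⟨R.vd i, (R.H_adj_df hp).symm⟩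
          omega
      refine beats hpop hM' _ {R.vd i, z} hI ?_ ?_
      · apply hWb_tool hM hM' _ _ hI
        intro v hvI hvW y
        apply untouched_iff
        · rintro e (rfl | rfl) hve <;> rcases Sym2.mem_iff.mp hve with rfl | rfl
          · exact hvI (Or.inl rfl)
          · exact hvW (Or.inl rfl)
          · exact hvI (Or.inr (Or.inl rfl))
          · exact hvW (Or.inr rfl)
        · rintro e (rfl | rfl) hve <;> rcases Sym2.mem_iff.mp hve with rfl | rfl
          · exact hvI (Or.inl rfl)
          · exact hvI (Or.inr (Or.inl rfl))
          · exact hvW (Or.inl rfl)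
          · exact hvI (Or.inr (Or.inr rfl))
      · have e1 : R.va i ∉ ({R.vc i, R.vf i j hp} : Set R.HV) := by
          simp [Reduction.va, Reduction.vc, Reduction.vf]
        have e2 : R.vc i ≠ R.vf i j hp := by simp [Reduction.vc, Reduction.vf]
        rw [Set.ncard_insert_of_notMem e1 (Set.toFinite _), Set.ncard_pair e2,
          Set.ncard_pair hzdi.symm]
        omega
  · -- c_i unmatched
    set M' := (M \ {s(R.va i, R.vd i)}) ∪ {s(R.va i, R.vc i)} with hM'def
    have hM' : IsMatching R.H M' := by
      apply matching_diff_union hM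
      · rintro e rfl
        exact (SimpleGraph.mem_edgeSet _).mpr (R.H_adj_ac i)
      · rintro e rfl e' rfl hne
        exact absurd rfl hne
      · rintro e rfl v hv e' he' hv'
        rcases Sym2.mem_iff.mp hv with rfl | rfl
        · exact endpoint_covered hM hdi (Sym2.mem_mk_left _ _) (Set.mem_singleton _)
            e' he' hv'
        · exact endpoint_unmatched hc e' he' hv'
    have hE1 : s(R.va i, R.vc i) ∈ M' := Or.inr rfl
    have hI : ∀ v ∈ ({R.va i, R.vc i} : Set R.HV),
        rank R.H R.prefH M' v < rank R.H R.prefH M v := by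
      rintro v (rfl | rfl)
      · rw [rank_eq_of_mem hM' hE1, rank_eq_of_mem hM hdi]
        have h1 : R.prefH (R.va i) (R.vc i) = 2 := R.pref_ac i
        have h2 : R.prefH (R.va i) (R.vd i) = 3 := R.pref_ad i
        omega
      · rw [rank_eq_of_mem hM' (by rwa [Sym2.eq_swap] at hE1), rank_eq_of_unmatched hc]
        have h1 : R.prefH (R.vc i) (R.va i) = 1 := R.pref_ca i
        have h2 : 0 < (R.H.neighborSet (R.vc i)).ncard :=
          (Set.ncard_pos (Set.toFinite _)).mpr ⟨R.va i, (R.H_adj_ac i).symm⟩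
        omega
    refine beats hpop hM' _ {R.vd i} hI ?_ ?_
    · apply hWb_tool hM hM' _ _ hI
      intro v hvI hvW y
      apply untouched_iff
      · rintro e rfl hve <;> rcases Sym2.mem_iff.mp hve with rfl | rfl
        · exact hvI (Or.inl rfl)
        · exact hvW rfl
      · rintro e rfl hve <;> rcases Sym2.mem_iff.mp hve with rfl | rfl
        · exact hvI (Or.inl rfl)
        · exact hvI (Or.inr rfl)
    · have e1 : R.va i ≠ R.vc i := by simp [Reduction.va, Reduction.vc]
      rw [Set.ncard_singleton, Set.ncard_pair e1]
      omega

lemma not_pop_cd {M : Set (Sym2 R.HV)} {i j : V} (hp : s(i, j) ∈ R.P)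
    (hpop : IsPopular R.H R.prefH M)
    (hci : s(R.va i, R.vc i) ∈ M) (hdj : s(R.va j, R.vd j) ∈ M) : False := by
  have hfin : Finite R.HV := R.hv_finite
  have hM : IsMatching R.H M := hpop.1
  have hij : i ≠ j := R.pair_ne hp
  have hp' : s(j, i) ∈ R.P := R.pair_swap hp
  -- f_{ji} is unmatched
  have hfju : ¬ Matched M (R.vf j i hp') := by
    rintro ⟨y, hy⟩
    rcases R.adj_f hp' (R.adj_of_mem hM hy) with rfl | rfl
    · have := partner_unique hM (by rwa [Sym2.eq_swap] at hy)
        (by rwa [Sym2.eq_swap] at hdj)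
      simp [Reduction.vf, Reduction.va] at this
    · have := partner_unique hM (by rwa [Sym2.eq_swap] at hy)
        (by rwa [Sym2.eq_swap] at hci)
      simp [Reduction.vf, Reduction.va] at this
  have hAcH : R.H.Adj (R.va j) (R.vc j) := R.H_adj_ac j
  have hDfH : R.H.Adj (R.vd j) (R.vf j i hp') := R.H_adj_df hp'
  by_cases hcj : Matched M (R.vc j)
  · obtain ⟨z, hz⟩ := hcj
    have hza : z ≠ R.va j := by
      rintro rfl
      have := partner_unique hM (by rwa [Sym2.eq_swap] at hz) hdj
      simp [Reduction.vc, Reduction.vd] at this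
    have hz2 : 2 ≤ R.pref (.c j) z.1 := by
      rcases R.adj_c hp' (R.adj_of_mem hM hz) with rfl | rfl | rfl | rfl
      · exact absurd rfl hza
      · rw [show (R.vb j).1 = Gad.b j from rfl, R.pref_cb j]
      · rw [show (R.vd i).1 = Gad.d i from rfl, R.pref_cd j i hp']; omega
      · rw [show (R.vf i j _).1 = Gad.f i j from rfl, R.pref_cf j i hp']; omega
    have hzd : z ≠ R.vd j := by
      rcases R.adj_c hp' (R.adj_of_mem hM hz) with rfl | rfl | rfl | rfl <;>
        simp [Reduction.va, Reduction.vb, Reduction.vd, Reduction.vf, hij]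
    set M' := (M \ {s(R.va j, R.vd j), s(R.vc j, z)}) ∪
      {s(R.va j, R.vc j), s(R.vd j, R.vf j i hp')} with hM'def
    have hM' : IsMatching R.H M' := by
      apply matching_diff_union hM
      · rintro e (rfl | rfl)
        · exact (SimpleGraph.mem_edgeSet _).mpr hAcH
        · exact (SimpleGraph.mem_edgeSet _).mpr hDfH
      · rintro e (rfl | rfl) e' (rfl | rfl) hne v hv hv' <;>
          [exact absurd rfl hne; skip; skip; exact absurd rfl hne] <;>
          rcases Sym2.mem_iff.mp hv with rfl | rfl <;>
          simp_all [Sym2.mem_iff, Reduction.va, Reduction.vb, Reduction.vc,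
            Reduction.vd, Reduction.vf]
      · rintro e (rfl | rfl) v hv e' he' hv' <;>
          rcases Sym2.mem_iff.mp hv with rfl | rfl
        · exact endpoint_covered hM hdj (Sym2.mem_mk_left _ _) (Or.inl rfl) e' he' hv'
        · exact endpoint_covered hM hz (Sym2.mem_mk_left _ _) (Or.inr rfl) e' he' hv'
        · exact endpoint_covered hM hdj (Sym2.mem_mk_right _ _) (Or.inl rfl) e' he' hv'
        · exact endpoint_unmatched hfju e' he' hv'
    have hAc : s(R.va j, R.vc j) ∈ M' := Or.inr (Or.inl rfl)
    have hDf : s(R.vd j, R.vf j i hp') ∈ M' := Or.inr (Or.inr rfl)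
    have hI : ∀ v ∈ ({R.va j, R.vc j, R.vf j i hp'} : Set R.HV),
        rank R.H R.prefH M' v < rank R.H R.prefH M v := by
      rintro v (rfl | rfl | rfl)
      · rw [rank_eq_of_mem hM' hAc, rank_eq_of_mem hM hdj]
        have h1 : R.prefH (R.va j) (R.vc j) = 2 := R.pref_ac j
        have h2 : R.prefH (R.va j) (R.vd j) = 3 := R.pref_ad j
        omega
      · rw [rank_eq_of_mem hM' (by rwa [Sym2.eq_swap] at hAc), rank_eq_of_mem hM hz]
        have h1 : R.prefH (R.vc j) (R.va j) = 1 := R.pref_ca j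
        have h2 : R.prefH (R.vc j) z = R.pref (.c j) z.1 := rfl
        omega
      · rw [rank_eq_of_mem hM' (by rwa [Sym2.eq_swap] at hDf), rank_eq_of_unmatched hfju]
        have h1 : R.prefH (R.vf j i hp') (R.vd j) = 1 := R.pref_fd j i hp'
        have h2 : 0 < (R.H.neighborSet (R.vf j i hp')).ncard :=
          (Set.ncard_pos (Set.toFinite _)).mpr ⟨R.vd j, hDfH.symm⟩
        omega
    refine beats hpop hM' _ {R.vd j, z} hI ?_ ?_
    · apply hWb_tool hM hM' _ _ hI
      intro v hvI hvW w
      apply untouched_iff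
      · rintro e (rfl | rfl) hve <;> rcases Sym2.mem_iff.mp hve with rfl | rfl
        · exact hvI (Or.inl rfl)
        · exact hvW (Or.inl rfl)
        · exact hvI (Or.inr (Or.inl rfl))
        · exact hvW (Or.inr rfl)
      · rintro e (rfl | rfl) hve <;> rcases Sym2.mem_iff.mp hve with rfl | rfl
        · exact hvI (Or.inl rfl)
        · exact hvI (Or.inr (Or.inl rfl))
        · exact hvW (Or.inl rfl)
        · exact hvI (Or.inr (Or.inr rfl))
    · have hd1 : R.va j ∉ ({R.vc j, R.vf j i hp'} : Set R.HV) := by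
        simp [Reduction.va, Reduction.vc, Reduction.vf]
      have hd2 : R.vc j ≠ R.vf j i hp' := by simp [Reduction.vc, Reduction.vf]
      rw [Set.ncard_pair (Ne.symm hzd), Set.ncard_insert_of_notMem hd1 (Set.toFinite _),
        Set.ncard_pair hd2]
      omega
  · set M' := (M \ {s(R.va j, R.vd j)}) ∪
      {s(R.va j, R.vc j), s(R.vd j, R.vf j i hp')} with hM'def
    have hM' : IsMatching R.H M' := by
      apply matching_diff_union hM
      · rintro e (rfl | rfl)
        · exact (SimpleGraph.mem_edgeSet _).mpr hAcH
        · exact (SimpleGraph.mem_edgeSet _).mpr hDfH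
      · rintro e (rfl | rfl) e' (rfl | rfl) hne v hv hv' <;>
          [exact absurd rfl hne; skip; skip; exact absurd rfl hne] <;>
          rcases Sym2.mem_iff.mp hv with rfl | rfl <;>
          simp_all [Sym2.mem_iff, Reduction.va, Reduction.vb, Reduction.vc,
            Reduction.vd, Reduction.vf]
      · rintro e (rfl | rfl) v hv e' he' hv' <;>
          rcases Sym2.mem_iff.mp hv with rfl | rfl
        · exact endpoint_covered hM hdj (Sym2.mem_mk_left _ _) (Set.mem_singleton _) e' he' hv'
        · exact endpoint_unmatched hcj e' he' hv'
        · exact endpoint_covered hM hdj (Sym2.mem_mk_right _ _) (Set.mem_singleton _) e' he' hv'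
        · exact endpoint_unmatched hfju e' he' hv'
    have hAc : s(R.va j, R.vc j) ∈ M' := Or.inr (Or.inl rfl)
    have hDf : s(R.vd j, R.vf j i hp') ∈ M' := Or.inr (Or.inr rfl)
    have hI : ∀ v ∈ ({R.va j, R.vc j, R.vf j i hp'} : Set R.HV),
        rank R.H R.prefH M' v < rank R.H R.prefH M v := by
      rintro v (rfl | rfl | rfl)
      · rw [rank_eq_of_mem hM' hAc, rank_eq_of_mem hM hdj]
        have h1 : R.prefH (R.va j) (R.vc j) = 2 := R.pref_ac j
        have h2 : R.prefH (R.va j) (R.vd j) = 3 := R.pref_ad j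
        omega
      · rw [rank_eq_of_mem hM' (by rwa [Sym2.eq_swap] at hAc), rank_eq_of_unmatched hcj]
        have h1 : R.prefH (R.vc j) (R.va j) = 1 := R.pref_ca j
        have h2 : 0 < (R.H.neighborSet (R.vc j)).ncard :=
          (Set.ncard_pos (Set.toFinite _)).mpr ⟨R.va j, hAcH.symm⟩
        omega
      · rw [rank_eq_of_mem hM' (by rwa [Sym2.eq_swap] at hDf), rank_eq_of_unmatched hfju]
        have h1 : R.prefH (R.vf j i hp') (R.vd j) = 1 := R.pref_fd j i hp'
        have h2 : 0 < (R.H.neighborSet (R.vf j i hp')).ncard :=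
          (Set.ncard_pos (Set.toFinite _)).mpr ⟨R.vd j, hDfH.symm⟩
        omega
    refine beats hpop hM' _ {R.vd j} hI ?_ ?_
    · apply hWb_tool hM hM' _ _ hI
      intro v hvI hvW w
      apply untouched_iff
      · rintro e rfl hve <;> rcases Sym2.mem_iff.mp hve with rfl | rfl
        · exact hvI (Or.inl rfl)
        · exact hvW rfl
      · rintro e (rfl | rfl) hve <;> rcases Sym2.mem_iff.mp hve with rfl | rfl
        · exact hvI (Or.inl rfl)
        · exact hvI (Or.inr (Or.inl rfl))
        · exact hvW rfl
        · exact hvI (Or.inr (Or.inr rfl))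
    · have hd1 : R.va j ∉ ({R.vc j, R.vf j i hp'} : Set R.HV) := by
        simp [Reduction.va, Reduction.vc, Reduction.vf]
      have hd2 : R.vc j ≠ R.vf j i hp' := by simp [Reduction.vc, Reduction.vf]
      rw [Set.ncard_singleton, Set.ncard_insert_of_notMem hd1 (Set.toFinite _),
        Set.ncard_pair hd2]
      omega

end Reduction

/-- If `M` is a popular matching in `H` and `U = {i : {a_i, b_i} ∈ M}`, then
`|U ∩ P| = 1` for every pair `P ∈ 𝒫`. -/
theorem popular_pair_count {V : Type u} [LinearOrder V] (R : Reduction V)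
    (M : Set (Sym2 R.HV)) (hM : IsPopular R.H R.prefH M) :
    ∀ e ∈ R.P, {x : V | x ∈ e ∧ s(R.va x, R.vb x) ∈ M}.ncard = 1 := by
  intro e
  induction e using Sym2.ind with
  | _ i j =>
    intro hp
    have hMm : IsMatching R.H M := hM.1
    have hnotboth : ¬ (s(R.va i, R.vb i) ∈ M ∧ s(R.va j, R.vb j) ∈ M) := fun h =>
      R.not_pop_B2 hp hM h.1 h.2
    have hatleast : s(R.va i, R.vb i) ∈ M ∨ s(R.va j, R.vb j) ∈ M := by
      by_contra h
      push_neg at h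
      obtain ⟨h1, h2⟩ := h
      obtain ⟨x, hx⟩ := R.claim1 hM i
      rcases R.adj_a (R.adj_of_mem hMm hx) with rfl | rfl | rfl
      · exact h1 hx
      · exact R.not_pop_ac hM hx
      · obtain ⟨y, hy⟩ := R.claim1 hM j
        rcases R.adj_a (R.adj_of_mem hMm hy) with rfl | rfl | rfl
        · exact h2 hy
        · exact R.not_pop_ac hM hy
        · exact R.not_pop_dd hp hM hx hy
    by_cases hPi : s(R.va i, R.vb i) ∈ M
    · have hPj : s(R.va j, R.vb j) ∉ M := fun h => hnotboth ⟨hPi, h⟩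
      have hset : {x : V | x ∈ s(i, j) ∧ s(R.va x, R.vb x) ∈ M} = {i} := by
        ext x
        constructor
        · rintro ⟨hx, h⟩
          rcases Sym2.mem_iff.mp hx with rfl | rfl
          · rfl
          · exact absurd h hPj
        · rintro rfl
          exact ⟨Sym2.mem_mk_left _ _, hPi⟩
      rw [hset, Set.ncard_singleton]
    · have hPj : s(R.va j, R.vb j) ∈ M := hatleast.resolve_left hPi
      have hset : {x : V | x ∈ s(i, j) ∧ s(R.va x, R.vb x) ∈ M} = {j} := by
        ext x
        constructor
        · rintro ⟨hx, h⟩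
          rcases Sym2.mem_iff.mp hx with rfl | rfl
          · exact absurd h hPi
          · rfl
        · rintro rfl
          exact ⟨Sym2.mem_mk_right _ _, hPj⟩
      rw [hset, Set.ncard_singleton]
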